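/- Let E and epsilon be real constants and define f(t, p, xi) = sin( p*xi + E*t ) * exp( -epsilon * t ). Then for all t in R, all p != 0, and all xi in R, f is an exact solution of the relativistic Fokker-Planck equation with simplified collision operator: (d/dt) f - E*xi*(d/dp) f - E*((1-xi^2)/p)*(d/dxi) f = (epsilon/p^2) * (d/dp)[ p^2 * (d/dp) f ] + (epsilon/p^2) * (d/dxi)[ (1-xi^2) * (d/dxi) f ]. -/

import Mathlib

lemma hd_p (ξ c k : ℝ) (q : ℝ) :
    HasDerivAt (fun q' : ℝ => Real.sin (q' * ξ + c) * k)
      (ξ * Real.cos (q * ξ + c) * k) q := by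
  have h : HasDerivAt (fun q' : ℝ => q' * ξ + c) ξ q := by
    simpa using ((hasDerivAt_id q).mul_const ξ).add_const c
  have := (h.sin).mul_const k
  simpa [mul_comm, mul_left_comm, mul_assoc] using this

lemma hd_xi (p c k : ℝ) (z : ℝ) :
    HasDerivAt (fun z' : ℝ => Real.sin (p * z' + c) * k)
      (p * Real.cos (p * z + c) * k) z := by
  have h : HasDerivAt (fun z' : ℝ => p * z' + c) p z := by
    simpa using ((hasDerivAt_id z).const_mul p).add_const c
  have := (h.sin).mul_const k
  simpa [mul_comm, mul_left_comm, mul_assoc] using this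

lemma hd_cos_p (ξ c k : ℝ) (q : ℝ) :
    HasDerivAt (fun q' : ℝ => ξ * Real.cos (q' * ξ + c) * k)
      (-(ξ * (Real.sin (q * ξ + c) * ξ)) * k) q := by
  have h : HasDerivAt (fun q' : ℝ => q' * ξ + c) ξ q := by
    simpa using ((hasDerivAt_id q).mul_const ξ).add_const c
  have := ((h.cos).const_mul ξ).mul_const k
  simpa [mul_comm, mul_left_comm, mul_assoc] using this

lemma hd_cos_xi (p c k : ℝ) (z : ℝ) :
    HasDerivAt (fun z' : ℝ => p * Real.cos (p * z' + c) * k)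
      (-(p * (Real.sin (p * z + c) * p)) * k) z := by
  have h : HasDerivAt (fun z' : ℝ => p * z' + c) p z := by
    simpa using ((hasDerivAt_id z).const_mul p).add_const c
  have := ((h.cos).const_mul p).mul_const k
  simpa [mul_comm, mul_left_comm, mul_assoc] using this

/-- The manufactured solution `f(t, p, ξ) = sin(pξ + Et) exp(-εt)` is an exact
solution of the relativistic Fokker--Planck equation with the simplified
collision operator (collision coefficients `C_F = 0`, `C_A = C_B = ε`). -/
theorem sin_exp_solution_collision (E ε : ℝ) :
    ∀ (t p ξ : ℝ), p ≠ 0 →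
      deriv (fun s : ℝ => Real.sin (p * ξ + E * s) * Real.exp (-ε * s)) t
        - E * ξ *
            deriv (fun q : ℝ => Real.sin (q * ξ + E * t) * Real.exp (-ε * t)) p
        - E * ((1 - ξ ^ 2) / p) *
            deriv (fun z : ℝ => Real.sin (p * z + E * t) * Real.exp (-ε * t)) ξ
      = (ε / p ^ 2) *
          deriv (fun q : ℝ => q ^ 2 *
            deriv (fun q' : ℝ =>
              Real.sin (q' * ξ + E * t) * Real.exp (-ε * t)) q) p
        + (ε / p ^ 2) *
          deriv (fun z : ℝ => (1 - z ^ 2) *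
            deriv (fun z' : ℝ =>
              Real.sin (p * z' + E * t) * Real.exp (-ε * t)) z) ξ := by
  intro t p ξ hp
  set c := E * t with hc
  set k := Real.exp (-ε * t) with hk
  set S := Real.sin (p * ξ + c) with hS
  set C := Real.cos (p * ξ + c) with hC
  -- time derivative
  have ht : deriv (fun s : ℝ => Real.sin (p * ξ + E * s) * Real.exp (-ε * s)) t
      = E * C * k + S * (-ε * k) := by
    have h1 : HasDerivAt (fun s : ℝ => p * ξ + E * s) E t := by
      simpa using ((hasDerivAt_id t).const_mul E).const_add (p * ξ)
    have h2 : HasDerivAt (fun s : ℝ => Real.exp (-ε * s)) (-ε * k) t := by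
      have h3 : HasDerivAt (fun s : ℝ => -ε * s) (-ε) t := by
        simpa using (hasDerivAt_id t).const_mul (-ε)
      simpa [hk, mul_comm] using h3.exp
    have := (h1.sin).mul h2
    simpa [Pi.mul_def, hS, hC, hk, mul_comm, mul_left_comm, mul_assoc] using this.deriv
  -- first-order space derivatives
  have hP : deriv (fun q : ℝ => Real.sin (q * ξ + c) * k) p = ξ * C * k :=
    (hd_p ξ c k p).deriv
  have hX : deriv (fun z : ℝ => Real.sin (p * z + c) * k) ξ = p * C * k :=
    (hd_xi p c k ξ).deriv
  -- second-order p term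
  have hP2 : deriv (fun q : ℝ => q ^ 2 *
      deriv (fun q' : ℝ => Real.sin (q' * ξ + c) * k) q) p
      = 2 * p * (ξ * C * k) + p ^ 2 * (-(ξ * (S * ξ)) * k) := by
    have heq : (fun q : ℝ => q ^ 2 *
        deriv (fun q' : ℝ => Real.sin (q' * ξ + c) * k) q)
        = fun q : ℝ => q ^ 2 * (ξ * Real.cos (q * ξ + c) * k) := by
      funext q; rw [(hd_p ξ c k q).deriv]
    rw [heq]
    have := (hasDerivAt_pow 2 p).mul (hd_cos_p ξ c k p)
    simpa [Pi.mul_def, hS, hC, pow_one] using this.deriv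
  -- second-order ξ term
  have hX2 : deriv (fun z : ℝ => (1 - z ^ 2) *
      deriv (fun z' : ℝ => Real.sin (p * z' + c) * k) z) ξ
      = (-(2 * ξ)) * (p * C * k) + (1 - ξ ^ 2) * (-(p * (S * p)) * k) := by
    have heq : (fun z : ℝ => (1 - z ^ 2) *
        deriv (fun z' : ℝ => Real.sin (p * z' + c) * k) z)
        = fun z : ℝ => (1 - z ^ 2) * (p * Real.cos (p * z + c) * k) := by
      funext z; rw [(hd_xi p c k z).deriv]
    rw [heq]
    have h1 : HasDerivAt (fun z : ℝ => 1 - z ^ 2) (-(2 * ξ)) ξ := by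
      simpa using ((hasDerivAt_pow 2 ξ).const_sub 1)
    have := h1.mul (hd_cos_xi p c k ξ)
    simpa [Pi.mul_def, hS, hC, pow_one] using this.deriv
  rw [ht, hP, hX, hP2, hX2]
  field_simp
  ring
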